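/- Let L be a complete lattice and f : L → L a monotone function. Then the map μ sending each post-fixed point x (i.e. x ≤ f(x)) to the least fixed point of f above x, and the map ν sending each pre-fixed point y (i.e. f(y) ≤ y) to the greatest fixed point of f below y, form a Galois connection: for all post-fixed points x and pre-fixed points y, μ(x) ≤ y if and only if x ≤ ν(y). -/
import Mathlib

/-- The Galois connection between post-fixed points and pre-fixed points of a
monotone function on a complete lattice: `μ x ≤ y ↔ x ≤ ν y`. -/
theorem relative_fixed_points_galois_connection
    {L : Type*} [CompleteLattice L] (f : L → L) (hf : Monotone f)
    (μ : ∀ x : L, x ≤ f x → L) (ν : ∀ y : L, f y ≤ y → L)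
    (hμ : ∀ (x : L) (hx : x ≤ f x), μ x hx = sInf {z | x ≤ z ∧ f z ≤ z})
    (hν : ∀ (y : L) (hy : f y ≤ y), ν y hy = sSup {z | z ≤ y ∧ z ≤ f z}) :
    ∀ (x y : L) (hx : x ≤ f x) (hy : f y ≤ y),
      μ x hx ≤ y ↔ x ≤ ν y hy := by
  intro x y hx hy
  rw [hμ, hν]
  have hxμ : x ≤ sInf {z | x ≤ z ∧ f z ≤ z} := le_sInf fun z hz => hz.1
  -- ν y is a post-fixed point:
  have hν1 : sSup {z | z ≤ y ∧ z ≤ f z} ≤ f (sSup {z | z ≤ y ∧ z ≤ f z}) :=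
    sSup_le fun z hz => hz.2.trans (hf (le_sSup hz))
  have hν2 : f (sSup {z | z ≤ y ∧ z ≤ f z}) ≤ sSup {z | z ≤ y ∧ z ≤ f z} :=
    le_sSup ⟨(hf (sSup_le fun z hz => hz.1)).trans hy, hf hν1⟩
  constructor
  · intro h
    exact le_sSup ⟨hxμ.trans h, hx⟩
  · intro h
    have hmem : sSup {z | z ≤ y ∧ z ≤ f z} ∈ {z | x ≤ z ∧ f z ≤ z} := ⟨h, hν2⟩
    exact (sInf_le hmem).trans (sSup_le fun z hz => hz.1)
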